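/- Let 0 < μ_1 < ... < μ_k and define γ_{l,n} := Σ_{j=1}^{l-1} μ_j^{n-2}/∏_{t=1, t≠j}^{l-1}(μ_j - μ_t) and Ω_l := Σ_{n=l}^{∞} γ_{l,n}/n!. Then for each s with 1 ≤ s ≤ k: Σ_{n=2}^{∞} μ_s^{n-2}/n! = Σ_{l=1}^{s} ∏_{t=1}^{l-1}(μ_s - μ_t) · Ω_{l+1}. (Equivalently, the phase-randomized coherent state of intensity μ_s decomposes as a positive combination of the vacuum, the single-photon state, and the basis states ρ_2,...,ρ_{s+1}.) -/

import Mathlib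

open Polynomial Finset

/-- `γ_{l,n} = Σ_{j=1}^{l-1} μ_j^{n-2}/∏_{t=1,t≠j}^{l-1}(μ_j - μ_t)`. -/
noncomputable def gammaCoef (μ : ℕ → ℝ) (l n : ℕ) : ℝ :=
  ∑ j ∈ Finset.Icc 1 (l - 1),
    μ j ^ (n - 2) / ∏ t ∈ (Finset.Icc 1 (l - 1)).erase j, (μ j - μ t)

/-- `Ω_l = Σ_{n=l}^∞ γ_{l,n}/n!`. -/
noncomputable def OmegaCoef (μ : ℕ → ℝ) (l : ℕ) : ℝ :=
  ∑' n : ℕ, if l ≤ n then gammaCoef μ l n / (n.factorial : ℝ) else 0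

lemma leadingCoeff_basisDivisor (a b : ℝ) :
    (Lagrange.basisDivisor a b).leadingCoeff = (a - b)⁻¹ := by
  rw [Lagrange.basisDivisor, leadingCoeff_mul, leadingCoeff_C,
    (monic_X_sub_C b).leadingCoeff, mul_one]

lemma coeff_lagrange_basis {v : ℕ → ℝ} {S : Finset ℕ} (hv : Set.InjOn v S) {i : ℕ} (hi : i ∈ S) :
    (Lagrange.basis S v i).coeff (S.card - 1) = ∏ t ∈ S.erase i, (v i - v t)⁻¹ := by
  have hdeg := Lagrange.degree_basis hv hi
  have hnd : (Lagrange.basis S v i).natDegree = S.card - 1 :=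
    natDegree_eq_of_degree_eq_some hdeg
  rw [← hnd, coeff_natDegree, Lagrange.basis, leadingCoeff_prod]
  exact Finset.prod_congr rfl fun t _ => leadingCoeff_basisDivisor _ _

/-- Vanishing of divided differences of low-degree monomials. -/
lemma dd_pow_eq_zero {v : ℕ → ℝ} {S : Finset ℕ} (hv : Set.InjOn v S) {m : ℕ}
    (hm : m + 1 < S.card) :
    ∑ j ∈ S, v j ^ m / ∏ t ∈ S.erase j, (v j - v t) = 0 := by
  have h1 : (Polynomial.X ^ m : ℝ[X]) = Lagrange.interpolate S v (fun i => v i ^ m) := by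
    have hd : (Polynomial.X ^ m : ℝ[X]).degree < S.card := by
      rw [degree_X_pow]
      exact_mod_cast Nat.lt_of_succ_lt hm
    have := Lagrange.eq_interpolate hv hd
    simpa using this
  have h2 := congrArg (fun p : ℝ[X] => p.coeff (S.card - 1)) h1
  simp only [Lagrange.interpolate_apply, finset_sum_coeff, coeff_C_mul, coeff_X_pow] at h2
  rw [if_neg (by omega)] at h2
  rw [eq_comm] at h2
  calc ∑ j ∈ S, v j ^ m / ∏ t ∈ S.erase j, (v j - v t)
      = ∑ j ∈ S, v j ^ m * (Lagrange.basis S v j).coeff (S.card - 1) := by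
        refine Finset.sum_congr rfl fun j hj => ?_
        rw [coeff_lagrange_basis hv hj, div_eq_mul_inv, Finset.prod_inv_distrib]
    _ = 0 := h2

lemma telescope (μ : ℕ → ℝ) (s j : ℕ) (hj : 1 ≤ j) (hjs : j ≤ s)
    (hne : ∀ a ∈ Finset.Icc 1 s, ∀ b ∈ Finset.Icc 1 s, a ≠ b → μ a ≠ μ b) :
    ∑ l ∈ Finset.Icc j s, (∏ t ∈ Finset.Icc 1 (l-1), (μ s - μ t)) /
        (∏ t ∈ (Finset.Icc 1 l).erase j, (μ j - μ t)) = if j = s then 1 else 0 := by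
  have hW : ∀ m, m ≤ s → (∏ t ∈ (Finset.Icc 1 m).erase j, (μ j - μ t)) ≠ 0 := by
    intro m hm
    refine Finset.prod_ne_zero_iff.mpr fun t ht => sub_ne_zero.mpr ?_
    obtain ⟨htj, htm⟩ := Finset.mem_erase.mp ht
    rw [Finset.mem_Icc] at htm
    exact hne j (Finset.mem_Icc.mpr ⟨hj, hjs⟩) t (Finset.mem_Icc.mpr ⟨htm.1, htm.2.trans hm⟩)
      (Ne.symm htj)
  have herase : (Finset.Icc 1 j).erase j = Finset.Icc 1 (j-1) := by
    ext x; simp only [Finset.mem_erase, Finset.mem_Icc]; omega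
  have claim1 : ∀ m, j ≤ m → m ≤ s →
      ∑ l ∈ Finset.Icc j m, (μ s - μ j) * ((∏ t ∈ Finset.Icc 1 (l-1), (μ s - μ t)) /
        (∏ t ∈ (Finset.Icc 1 l).erase j, (μ j - μ t)))
      = (∏ t ∈ Finset.Icc 1 m, (μ s - μ t)) /
        (∏ t ∈ (Finset.Icc 1 m).erase j, (μ j - μ t)) := by
    intro m hjm hms
    induction m, hjm using Nat.le_induction with
    | base =>
        rw [Finset.Icc_self, Finset.sum_singleton, herase]
        have hins : Finset.Icc 1 j = insert j (Finset.Icc 1 (j-1)) := by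
          ext x; simp only [Finset.mem_Icc, Finset.mem_insert]; omega
        have hnotmem : j ∉ Finset.Icc 1 (j-1) := by simp [Finset.mem_Icc]; omega
        rw [hins, Finset.prod_insert hnotmem]
        field_simp
    | succ m hjm ih =>
        have hms' : m ≤ s := by omega
        rw [Finset.sum_Icc_succ_top (by omega), ih hms']
        have hset1 : Finset.Icc 1 (m+1) = insert (m+1) (Finset.Icc 1 m) := by
          ext x; simp only [Finset.mem_Icc, Finset.mem_insert]; omega
        have hset2 : (Finset.Icc 1 (m+1)).erase j = insert (m+1) ((Finset.Icc 1 m).erase j) := by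
          ext x; simp only [Finset.mem_erase, Finset.mem_Icc, Finset.mem_insert]; omega
        have hnm1 : (m+1) ∉ Finset.Icc 1 m := by simp [Finset.mem_Icc]
        have hnm2 : (m+1) ∉ (Finset.Icc 1 m).erase j := fun h => hnm1 (Finset.mem_of_mem_erase h)
        have hQ : (∏ t ∈ (Finset.Icc 1 m).erase j, (μ j - μ t)) ≠ 0 := hW m hms'
        have hd : μ j - μ (m+1) ≠ 0 := by
          refine sub_ne_zero.mpr (hne j (Finset.mem_Icc.mpr ⟨hj, hjs⟩)
            (m+1) (Finset.mem_Icc.mpr ⟨by omega, by omega⟩) (by omega))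
        rw [Nat.add_sub_cancel, hset2, hset1, Finset.prod_insert hnm2,
          Finset.prod_insert hnm1]
        field_simp
        ring
  by_cases hcase : j = s
  · subst hcase
    rw [if_pos rfl, Finset.Icc_self, Finset.sum_singleton, herase]
    refine div_self (Finset.prod_ne_zero_iff.mpr fun t ht => sub_ne_zero.mpr ?_)
    rw [Finset.mem_Icc] at ht
    exact hne j (Finset.mem_Icc.mpr ⟨hj, le_refl j⟩) t (Finset.mem_Icc.mpr ⟨ht.1, by omega⟩)
      (by omega)
  · rw [if_neg hcase]
    have h0 := claim1 s hjs le_rfl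
    have hz : (∏ t ∈ Finset.Icc 1 s, (μ s - μ t)) = 0 :=
      Finset.prod_eq_zero (Finset.mem_Icc.mpr ⟨le_trans hj hjs, le_rfl⟩) (sub_self _)
    rw [hz, zero_div, ← Finset.mul_sum] at h0
    have hsj : μ s - μ j ≠ 0 := sub_ne_zero.mpr
      (hne s (Finset.mem_Icc.mpr ⟨le_trans hj hjs, le_rfl⟩) j (Finset.mem_Icc.mpr ⟨hj, hjs⟩)
        (fun h => hcase h.symm))
    exact (mul_eq_zero.mp h0).resolve_left hsj

/-- Newton interpolation identity evaluated at the top node. -/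
lemma newton (μ : ℕ → ℝ) (s : ℕ) (hs1 : 1 ≤ s)
    (hne : ∀ a ∈ Finset.Icc 1 s, ∀ b ∈ Finset.Icc 1 s, a ≠ b → μ a ≠ μ b) (g : ℕ → ℝ) :
    ∑ l ∈ Finset.Icc 1 s, (∏ t ∈ Finset.Icc 1 (l-1), (μ s - μ t)) *
      (∑ j ∈ Finset.Icc 1 l, g j / ∏ t ∈ (Finset.Icc 1 l).erase j, (μ j - μ t)) = g s := by
  have step1 : ∑ l ∈ Finset.Icc 1 s, (∏ t ∈ Finset.Icc 1 (l-1), (μ s - μ t)) *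
      (∑ j ∈ Finset.Icc 1 l, g j / ∏ t ∈ (Finset.Icc 1 l).erase j, (μ j - μ t))
      = ∑ l ∈ Finset.Icc 1 s, ∑ j ∈ Finset.Icc 1 s, (if j ≤ l then
          g j * ((∏ t ∈ Finset.Icc 1 (l-1), (μ s - μ t)) /
            ∏ t ∈ (Finset.Icc 1 l).erase j, (μ j - μ t)) else 0) := by
    refine Finset.sum_congr rfl fun l hl => ?_
    rw [Finset.mem_Icc] at hl
    rw [Finset.mul_sum, ← Finset.sum_filter]
    have : (Finset.Icc 1 s).filter (· ≤ l) = Finset.Icc 1 l := by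
      ext x; simp only [Finset.mem_filter, Finset.mem_Icc]; omega
    rw [this]
    refine Finset.sum_congr rfl fun x _ => ?_
    ring
  rw [step1, Finset.sum_comm]
  have step2 : ∀ j ∈ Finset.Icc 1 s, ∑ l ∈ Finset.Icc 1 s, (if j ≤ l then
      g j * ((∏ t ∈ Finset.Icc 1 (l-1), (μ s - μ t)) /
        ∏ t ∈ (Finset.Icc 1 l).erase j, (μ j - μ t)) else 0)
      = g j * (if j = s then 1 else 0) := by
    intro j hj
    rw [Finset.mem_Icc] at hj
    rw [← Finset.sum_filter]
    have : (Finset.Icc 1 s).filter (j ≤ ·) = Finset.Icc j s := by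
      ext x; simp only [Finset.mem_filter, Finset.mem_Icc]; omega
    rw [this, ← Finset.mul_sum, telescope μ s j hj.1 hj.2 hne]
  rw [Finset.sum_congr rfl step2]
  simp only [mul_ite, mul_one, mul_zero]
  rw [Finset.sum_ite_eq' (Finset.Icc 1 s) s g]
  rw [if_pos (Finset.mem_Icc.mpr ⟨hs1, le_rfl⟩)]

lemma summable_pow_sub_two_div_factorial {x : ℝ} (hx : 0 < x) :
    Summable (fun n : ℕ => x ^ (n - 2) / (n.factorial : ℝ)) := by
  rw [← summable_nat_add_iff 2]
  simp only [Nat.add_sub_cancel]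
  refine Summable.of_nonneg_of_le (fun n => by positivity) (fun n => ?_)
    (Real.summable_pow_div_factorial x)
  have h : (n.factorial : ℝ) ≤ ((n+2).factorial : ℝ) := by
    exact_mod_cast Nat.factorial_le (by omega)
  exact div_le_div_of_nonneg_left (by positivity) (by positivity) h

/-- The convex expansion of the phase-randomized coherent state: for
`0 < μ_1 < … < μ_k` and `1 ≤ s ≤ k`,
`Σ_{n=2}^∞ μ_s^{n-2}/n! = Σ_{l=1}^{s} ∏_{t=1}^{l-1}(μ_s - μ_t) · Ω_{l+1}`. -/
theorem coherent_state_expansion (k s : ℕ) (hs1 : 1 ≤ s) (hsk : s ≤ k)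
    (μ : ℕ → ℝ) (hpos : ∀ i, 1 ≤ i → i ≤ k → 0 < μ i)
    (hmono : ∀ i j, 1 ≤ i → i < j → j ≤ k → μ i < μ j) :
    (∑' n : ℕ, if 2 ≤ n then μ s ^ (n - 2) / (n.factorial : ℝ) else 0) =
      ∑ l ∈ Finset.Icc 1 s,
        (∏ t ∈ Finset.Icc 1 (l - 1), (μ s - μ t)) * OmegaCoef μ (l + 1) := by
  have hne : ∀ a ∈ Finset.Icc 1 s, ∀ b ∈ Finset.Icc 1 s, a ≠ b → μ a ≠ μ b := by
    intro a ha b hb hab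
    rw [Finset.mem_Icc] at ha hb
    rcases Nat.lt_or_ge a b with h | h
    · exact ne_of_lt (hmono a b ha.1 h (hb.2.trans hsk))
    · have hba : b < a := by omega
      exact (ne_of_lt (hmono b a hb.1 hba (ha.2.trans hsk))).symm
  -- summability of the Omega summands
  have hb_sum : ∀ l ∈ Finset.Icc 1 s, Summable (fun n : ℕ =>
      if l + 1 ≤ n then gammaCoef μ (l+1) n / (n.factorial : ℝ) else 0) := by
    intro l hl
    rw [Finset.mem_Icc] at hl
    have hrw : (fun n : ℕ => if l + 1 ≤ n then gammaCoef μ (l+1) n / (n.factorial:ℝ) else 0)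
        = fun n : ℕ => ∑ j ∈ Finset.Icc 1 l, (if l + 1 ≤ n then
            (μ j ^ (n-2) / ∏ t ∈ (Finset.Icc 1 l).erase j, (μ j - μ t)) / (n.factorial:ℝ)
            else 0) := by
      funext n
      by_cases h : l + 1 ≤ n
      · simp only [if_pos h, gammaCoef, Nat.add_sub_cancel, Finset.sum_div]
      · simp only [if_neg h, Finset.sum_const_zero]
    rw [hrw]
    refine summable_sum fun j hj => ?_
    rw [Finset.mem_Icc] at hj
    have hrepr : (fun n : ℕ => if l + 1 ≤ n then
        (μ j ^ (n-2) / ∏ t ∈ (Finset.Icc 1 l).erase j, (μ j - μ t)) / (n.factorial:ℝ) else 0)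
        = Set.indicator {n : ℕ | l + 1 ≤ n}
            (fun n => (μ j ^ (n-2) / ∏ t ∈ (Finset.Icc 1 l).erase j, (μ j - μ t))
              / (n.factorial:ℝ)) := by
      funext n
      rw [Set.indicator_apply]
      simp [Set.mem_setOf_eq]
    rw [hrepr]
    refine Summable.indicator ?_ _
    have heq : (fun n : ℕ => (μ j ^ (n-2) / ∏ t ∈ (Finset.Icc 1 l).erase j, (μ j - μ t))
        / (n.factorial:ℝ))
        = fun n : ℕ => (μ j ^ (n-2) / (n.factorial:ℝ))
            / ∏ t ∈ (Finset.Icc 1 l).erase j, (μ j - μ t) :=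
      funext fun n => div_right_comm _ _ _
    rw [heq]
    exact (summable_pow_sub_two_div_factorial
      (hpos j hj.1 (le_trans hj.2 (le_trans hl.2 hsk)))).div_const _
  have hrhs : ∑ l ∈ Finset.Icc 1 s,
      (∏ t ∈ Finset.Icc 1 (l - 1), (μ s - μ t)) * OmegaCoef μ (l + 1)
      = ∑' n : ℕ, ∑ l ∈ Finset.Icc 1 s, (∏ t ∈ Finset.Icc 1 (l - 1), (μ s - μ t)) *
          (if l + 1 ≤ n then gammaCoef μ (l+1) n / (n.factorial : ℝ) else 0) := by
    rw [Summable.tsum_finsetSum (fun l hl => ((hb_sum l hl).mul_left _))]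
    refine Finset.sum_congr rfl fun l hl => ?_
    rw [OmegaCoef, ← tsum_mul_left]
  rw [hrhs]
  refine tsum_congr fun n => ?_
  by_cases h2 : 2 ≤ n
  · rw [if_pos h2]
    have hstep : ∀ l ∈ Finset.Icc 1 s, (∏ t ∈ Finset.Icc 1 (l - 1), (μ s - μ t)) *
        (if l + 1 ≤ n then gammaCoef μ (l+1) n / (n.factorial : ℝ) else 0)
        = ((∏ t ∈ Finset.Icc 1 (l - 1), (μ s - μ t)) *
            (∑ j ∈ Finset.Icc 1 l, μ j ^ (n-2) /
              ∏ t ∈ (Finset.Icc 1 l).erase j, (μ j - μ t))) / (n.factorial : ℝ) := by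
      intro l hl
      rw [Finset.mem_Icc] at hl
      by_cases hln : l + 1 ≤ n
      · rw [if_pos hln, gammaCoef, Nat.add_sub_cancel, mul_div_assoc]
      · rw [if_neg hln]
        have hγ : ∑ j ∈ Finset.Icc 1 l, μ j ^ (n-2) /
            ∏ t ∈ (Finset.Icc 1 l).erase j, (μ j - μ t) = 0 := by
          refine dd_pow_eq_zero (fun a ha b hb hab => ?_) ?_
          · by_contra hne'
            rw [Finset.mem_coe, Finset.mem_Icc] at ha hb
            exact hne a (Finset.mem_Icc.mpr ⟨ha.1, le_trans ha.2 hl.2⟩)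
              b (Finset.mem_Icc.mpr ⟨hb.1, le_trans hb.2 hl.2⟩) hne' hab
          · rw [Nat.card_Icc]
            omega
        rw [hγ, mul_zero, zero_div]
    rw [Finset.sum_congr rfl hstep, ← Finset.sum_div,
      newton μ s hs1 hne (fun j => μ j ^ (n-2))]
  · rw [if_neg h2]
    symm
    refine Finset.sum_eq_zero fun l hl => ?_
    rw [Finset.mem_Icc] at hl
    rw [if_neg (by omega), mul_zero]
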